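/- arXiv:math/0703475 — 2 statements merged into one kernel-verified Lean document; each statement's English description precedes it below -/
import Mathlib

section
/- Let f : ℂ → ℂ be a nonconstant entire (everywhere analytic) surjective function. For n ≥ 1 and y ∈ ℂ, let D(n, y) ∈ ℕ denote the local degree of the n-th iterate f^[n] at y, i.e., the order of vanishing of z ↦ f^[n](z) − f^[n](y) at y (a finite positive natural number since f^[n] is nonconstant). Suppose ν : ℂ → ℕ satisfies, for every x ∈ ℂ: (i) D(n, y) divides ν(x) whenever n ≥ 1 and f^[n](y) = x, and (ii) for every m ∈ ℕ, if D(n, y) divides m whenever n ≥ 1 and f^[n](y) = x, then ν(x) divides m. Then for every x ∈ ℂ, D(1, x)·ν(x) divides ν(f(x)). -/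
/-- Lemma 2.1 of the paper, for entire self-maps of `ℂ`: if `f` is a nonconstant
entire surjective function, `D n y` is the local degree of `f^[n]` at `y`
(the order of vanishing of `z ↦ f^[n] z - f^[n] y` at `y`), and `ν : ℂ → ℕ`
is the lcm (in the divisibility order) of the local degrees `D n y` over all
`n ≥ 1` and `y` with `f^[n] y = x`, then `D 1 x * ν x` divides `ν (f x)`. -/
theorem degree_mul_nu_dvd_nu_image
    (f : ℂ → ℂ) (hf : ∀ z, AnalyticAt ℂ f z)
    (hnc : ¬ ∃ c : ℂ, ∀ z, f z = c)
    (hsurj : Function.Surjective f)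
    (D : ℕ → ℂ → ℕ)
    (hD : ∀ n : ℕ, 1 ≤ n → ∀ y : ℂ,
      ∀ h : AnalyticAt ℂ (fun z => f^[n] z - f^[n] y) y,
        analyticOrderAt (fun z => f^[n] z - f^[n] y) y = (D n y : ℕ∞))
    (ν : ℂ → ℕ)
    (hν₁ : ∀ x : ℂ, ∀ n : ℕ, 1 ≤ n → ∀ y : ℂ, f^[n] y = x → D n y ∣ ν x)
    (hν₂ : ∀ x : ℂ, ∀ m : ℕ,
      (∀ n : ℕ, 1 ≤ n → ∀ y : ℂ, f^[n] y = x → D n y ∣ m) → ν x ∣ m) :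
    ∀ x : ℂ, D 1 x * ν x ∣ ν (f x) := by
  -- analyticity of iterates
  have hiter : ∀ n : ℕ, ∀ y : ℂ, AnalyticAt ℂ (f^[n]) y := by
    intro n
    induction n with
    | zero => intro y; simpa using analyticAt_id (𝕜 := ℂ)
    | succ n ih =>
      intro y
      rw [Function.iterate_succ']
      exact (hf (f^[n] y)).comp (ih y)
  have hA : ∀ n : ℕ, ∀ y : ℂ, AnalyticAt ℂ (fun z => f^[n] z - f^[n] y) y :=
    fun n y => (hiter n y).sub analyticAt_const
  -- multiplicativity of local degrees
  have key : ∀ n : ℕ, 1 ≤ n → ∀ y : ℂ, D (n + 1) y = D n y * D 1 (f^[n] y) := by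
    intro n hn y
    set x := f^[n] y with hx
    -- factorizations
    have h1 := (hA n y).analyticOrderAt_eq_natCast (n := D n y)
    rw [hD n hn y (hA n y)] at h1
    obtain ⟨u, hu, hu0, huev⟩ := h1.mp rfl
    have h2 := (hA 1 x).analyticOrderAt_eq_natCast (n := D 1 x)
    rw [hD 1 le_rfl x (hA 1 x)] at h2
    obtain ⟨v, hv, hv0, hvev⟩ := h2.mp rfl
    simp only [Function.iterate_one, smul_eq_mul] at hvev
    -- pull back the factorization of f near x through f^[n]
    have hcont : Filter.Tendsto (f^[n]) (nhds y) (nhds x) :=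
      (hiter n y).continuousAt
    have hvev' : ∀ᶠ z in nhds y,
        f (f^[n] z) - f x = (f^[n] z - x) ^ D 1 x * v (f^[n] z) :=
      hcont.eventually hvev
    have hfact : ∀ᶠ z in nhds y,
        f^[n + 1] z - f^[n + 1] y
          = (z - y) ^ (D n y * D 1 x) * ((u z) ^ D 1 x * v (f^[n] z)) := by
      filter_upwards [hvev', huev] with z h2' h1'
      simp only [smul_eq_mul] at h1'
      have : f^[n + 1] z - f^[n + 1] y = f (f^[n] z) - f x := by
        simp [Function.iterate_succ_apply', hx]
      rw [this, h2', h1', mul_pow, ← pow_mul]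
      ring
    have horder : analyticOrderAt (fun z => f^[n + 1] z - f^[n + 1] y) y = ((D n y * D 1 x : ℕ) : ℕ∞) := by
      rw [(hA (n + 1) y).analyticOrderAt_eq_natCast]
      refine ⟨fun z => (u z) ^ D 1 x * v (f^[n] z), ?_, ?_, ?_⟩
      · exact (hu.pow _).mul ((hv.comp (hiter n y)).congr (by rfl))
      · simpa [hx] using mul_ne_zero (pow_ne_zero _ hu0) hv0
      · simpa [smul_eq_mul] using hfact
    rw [hD (n + 1) (by omega) y (hA (n + 1) y)] at horder
    exact_mod_cast horder
  intro x
  have hk : D 1 x ∣ ν (f x) := hν₁ (f x) 1 le_rfl x (by simp)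
  have hdiv : ∀ n : ℕ, 1 ≤ n → ∀ y : ℂ, f^[n] y = x → D n y ∣ ν (f x) / D 1 x := by
    intro n hn y hy
    rw [Nat.dvd_div_iff_mul_dvd hk, mul_comm]
    have : D n y * D 1 x = D (n + 1) y := by rw [key n hn y, hy]
    rw [this]
    exact hν₁ (f x) (n + 1) (by omega) y (by rw [Function.iterate_succ_apply', hy])
  have := hν₂ x (ν (f x) / D 1 x) hdiv
  rwa [Nat.dvd_div_iff_mul_dvd hk] at this
end

section
/- Let f : ℂ → ℂ be a nonconstant entire (everywhere analytic) function and let x ∈ ℂ. Then x lies in the postcritical set ⋃_{k≥1} f^[k] '' {z : f′(z) = 0} if and only if there exist n ≥ 1 and y ∈ ℂ with f^[n](y) = x such that the order of vanishing of z ↦ f^[n](z) − x at y is at least 2. -/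
open Filter Topology

private lemma iterate_analytic (f : ℂ → ℂ) (hf : ∀ z, AnalyticAt ℂ f z) :
    ∀ n z, AnalyticAt ℂ f^[n] z := by
  intro n
  induction n with
  | zero => intro z; simpa using analyticAt_id
  | succ n ih =>
      intro z
      rw [Function.iterate_succ']
      exact (hf _).comp (ih z)

private lemma deriv_iterate (f : ℂ → ℂ) (hf : ∀ z, AnalyticAt ℂ f z) :
    ∀ n y, deriv f^[n] y = ∏ i ∈ Finset.range n, deriv f (f^[i] y) := by
  intro n
  induction n with
  | zero => intro y; simp
  | succ n ih =>
      intro y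
      rw [Function.iterate_succ', Finset.prod_range_succ,
        deriv_comp y (hf _).differentiableAt
          (iterate_analytic f hf n y).differentiableAt, ih, mul_comm]

private lemma order_ge_two_iff (g : ℂ → ℂ) (y : ℂ) (h : AnalyticAt ℂ g y) :
    2 ≤ analyticOrderAt g y ↔ g y = 0 ∧ deriv g y = 0 := by
  have order_ne_zero_of_eq : g y = 0 → analyticOrderAt g y ≠ 0 := by
    intro hy h0
    obtain ⟨r, hr, hry, hev⟩ := (h.analyticOrderAt_eq_natCast (n := 0)).mp (by exact_mod_cast h0)
    have := hev.self_of_nhds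
    simp only [pow_zero, one_smul] at this
    exact hry (this ▸ hy)
  constructor
  · intro h2
    have hy : g y = 0 := by
      rcases eq_or_ne (analyticOrderAt g y) ⊤ with htop | hfin
      · exact (analyticOrderAt_eq_top.mp htop).self_of_nhds
      · lift analyticOrderAt g y to ℕ using hfin with m hm
        have hm2 : 2 ≤ m := by exact_mod_cast h2
        obtain ⟨r, hr, hry, hev⟩ := (h.analyticOrderAt_eq_natCast (n := m)).mp hm.symm
        have := hev.self_of_nhds
        simpa [sub_self, zero_pow (by omega : m ≠ 0)] using this
    refine ⟨hy, ?_⟩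
    rcases eq_or_ne (analyticOrderAt g y) ⊤ with htop | hfin
    · have hev : g =ᶠ[𝓝 y] (fun _ => (0 : ℂ)) := analyticOrderAt_eq_top.mp htop
      rw [hev.deriv_eq]
      simp
    · lift analyticOrderAt g y to ℕ using hfin with m hm
      have hm2 : 2 ≤ m := by exact_mod_cast h2
      obtain ⟨r, hr, hry, hev⟩ := (h.analyticOrderAt_eq_natCast (n := m)).mp hm.symm
      have hev' : g =ᶠ[𝓝 y] fun z => (z - y) ^ m * r z := by
        filter_upwards [hev] with z hz using by simpa using hz
      rw [hev'.deriv_eq]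
      have hd1 : DifferentiableAt ℂ (fun z : ℂ => (z - y) ^ m) y := by
        fun_prop
      rw [deriv_fun_mul hd1 hr.differentiableAt]
      have hz0 : deriv (fun z : ℂ => (z - y) ^ m) y = 0 := by
        rw [deriv_fun_pow (by fun_prop : DifferentiableAt ℂ (fun z : ℂ => z - y) y) m]
        simp [sub_self, zero_pow (by omega : m - 1 ≠ 0)]
      rw [hz0]
      simp [sub_self, zero_pow (by omega : m ≠ 0)]
  · rintro ⟨hy, hd⟩
    have h0 : analyticOrderAt g y ≠ 0 := order_ne_zero_of_eq hy
    have h1 : analyticOrderAt g y ≠ 1 := by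
      intro h1
      obtain ⟨r, hr, hry, hev⟩ := (h.analyticOrderAt_eq_natCast (n := 1)).mp (by exact_mod_cast h1)
      have hev' : g =ᶠ[𝓝 y] fun z => (z - y) * r z := by
        filter_upwards [hev] with z hz using by simpa using hz
      have : deriv g y = r y := by
        rw [hev'.deriv_eq, deriv_fun_mul (by fun_prop) hr.differentiableAt]
        simp
      exact hry (by rw [← this, hd])
    rcases eq_or_ne (analyticOrderAt g y) ⊤ with htop | hfin
    · rw [htop]; exact le_top
    · lift analyticOrderAt g y to ℕ using hfin with m hm
      have hm0 : m ≠ 0 := by simpa using h0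
      have hm1 : m ≠ 1 := by
        intro h'; exact h1 (by exact_mod_cast h')
      exact_mod_cast (by omega : 2 ≤ m)

/-- For a nonconstant entire map `f : ℂ → ℂ`, a point `x` lies in the postcritical set
`⋃_{k≥1} f^[k] '' {z : f′ z = 0}` if and only if there exist `n ≥ 1` and `y` with
`f^[n] y = x` such that the order of vanishing of `z ↦ f^[n] z - x` at `y` is at
least `2` (i.e. the local degree of `f^[n]` at `y` is at least `2`). -/
theorem mem_postcritical_iff_exists_degree_ge_two
    (f : ℂ → ℂ) (hf : ∀ z, AnalyticAt ℂ f z)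
    (hnc : ¬ ∃ c : ℂ, ∀ z, f z = c) (x : ℂ) :
    x ∈ (⋃ k : ℕ, ⋃ _ : 1 ≤ k, f^[k] '' {z : ℂ | deriv f z = 0}) ↔
      ∃ n : ℕ, 1 ≤ n ∧ ∃ y : ℂ, f^[n] y = x ∧
        ∀ h : AnalyticAt ℂ (fun z => f^[n] z - x) y, 2 ≤ analyticOrderAt (fun z => f^[n] z - x) y := by
  constructor
  · intro hx
    simp only [Set.mem_iUnion, Set.mem_image, Set.mem_setOf_eq] at hx
    obtain ⟨k, hk1, c, hc, hck⟩ := hx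
    refine ⟨k, hk1, c, hck, fun h => ?_⟩
    rw [order_ge_two_iff _ _ h]
    constructor
    · simp [hck]
    · have hdk : deriv f^[k] c = 0 := by
        rw [deriv_iterate f hf]
        exact Finset.prod_eq_zero (Finset.mem_range.mpr (by omega : (0:ℕ) < k))
          (by simpa using hc)
      rw [deriv_sub_const]
      exact hdk
  · rintro ⟨n, hn, y, hxy, hord⟩
    have han : AnalyticAt ℂ (fun z => f^[n] z - x) y :=
      (iterate_analytic f hf n y).sub analyticAt_const
    have h2 := (order_ge_two_iff _ _ han).mp (hord han)
    have hd : deriv f^[n] y = 0 := by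
      have := h2.2
      rwa [deriv_sub_const] at this
    rw [deriv_iterate f hf] at hd
    obtain ⟨i, hi, hfi⟩ := Finset.prod_eq_zero_iff.mp hd
    rw [Finset.mem_range] at hi
    simp only [Set.mem_iUnion, Set.mem_image, Set.mem_setOf_eq]
    exact ⟨n - i, by omega, f^[i] y, hfi, by
      rw [← Function.iterate_add_apply, Nat.sub_add_cancel (by omega)]; exact hxy⟩
end
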